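/- Let (c_n) ∈ ℓ²(ℝ), (p_n(0)) ∈ Δ, and define p_n(t) := p_n(0) e^{c_n t} / ∑_{k=0}^∞ p_k(0) e^{c_k t} for t ≥ 0. Then for each n the function t ↦ p_n(t) is differentiable on [0,∞) and satisfies the ℓ²-Fisher–Rao gradient-flow equation d/dt p_n(t) = p_n(t) c_n − (∑_{k=0}^∞ c_k p_k(t)) · p_n(t), with initial condition p_n(0). That is, the curves (p_n(t)) are the gradient flow lines of the linear functional F_c(p) = ∑ c_n p_n with respect to the ℓ²-Fisher–Rao metric on Δ. -/

import Mathlib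

/-- The ℓ²-probability simplex `Δ`. -/
def simplex : Set (ℕ → ℝ) :=
  {p | Summable p ∧ (∀ n, 0 < p n) ∧ ∑' n, p n = 1}

/-- The ℓ²-Fisher–Rao gradient flow of the linear functional `F_c`:
`p_n(t) = p_n(0) e^{c_n t} / ∑_k p_k(0) e^{c_k t}`. -/
noncomputable def flow (c p0 : ℕ → ℝ) (t : ℝ) (n : ℕ) : ℝ :=
  p0 n * Real.exp (c n * t) / ∑' k, p0 k * Real.exp (c k * t)

/-- each component `t ↦ p_n(t)` of the curve
`p_n(t) = p_n(0)e^{c_n t}/∑_k p_k(0)e^{c_k t}` is differentiable on `[0,∞)` and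
satisfies the ℓ²-Fisher–Rao gradient-flow equation
`d/dt p_n(t) = p_n(t) c_n − (∑_k c_k p_k(t)) p_n(t)`, with initial condition `p_n(0)`. -/
theorem flow_is_gradient_flow (c p0 : ℕ → ℝ)
    (hc : Summable (fun n => c n ^ 2)) (hp0 : p0 ∈ simplex) :
    (∀ n, flow c p0 0 n = p0 n) ∧
    ∀ (n : ℕ) (t : ℝ), 0 ≤ t →
      HasDerivAt (fun s => flow c p0 s n)
        (flow c p0 t n * c n - (∑' k, c k * flow c p0 t k) * flow c p0 t n) t := by
  obtain ⟨hsum, hpos, hone⟩ := hp0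
  -- c is bounded
  have habs : Filter.Tendsto (fun n => |c n|) Filter.atTop (nhds 0) := by
    have h2 : Filter.Tendsto (fun n => c n ^ 2) Filter.atTop (nhds 0) :=
      hc.tendsto_atTop_zero
    have h3 : Filter.Tendsto (fun n => Real.sqrt (c n ^ 2)) Filter.atTop
        (nhds (Real.sqrt 0)) := (Real.continuous_sqrt.tendsto 0).comp h2
    rw [Real.sqrt_zero] at h3
    have he : (fun n => Real.sqrt (c n ^ 2)) = fun n => |c n| := by
      funext n; exact Real.sqrt_sq_eq_abs _
    rwa [he] at h3
  obtain ⟨M, hM⟩ : ∃ M, ∀ n, |c n| ≤ M := by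
    have hbdd : BddAbove (Set.range fun n => |c n|) := habs.bddAbove_range
    obtain ⟨M, hM⟩ := hbdd
    exact ⟨M, fun n => hM ⟨n, rfl⟩⟩
  have hM0 : 0 ≤ M := le_trans (abs_nonneg _) (hM 0)
  -- summability of the partition function for each x
  have hZs : ∀ x : ℝ, Summable (fun k => p0 k * Real.exp (c k * x)) := by
    intro x
    apply Summable.of_nonneg_of_le
      (fun k => mul_nonneg (hpos k).le (Real.exp_pos _).le)
      (fun k => ?_) (hsum.mul_right (Real.exp (M * |x|)))
    have : c k * x ≤ M * |x| := by
      calc c k * x ≤ |c k * x| := le_abs_self _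
      _ = |c k| * |x| := abs_mul _ _
      _ ≤ M * |x| := by apply mul_le_mul_of_nonneg_right (hM k) (abs_nonneg x)
    exact mul_le_mul_of_nonneg_left (Real.exp_le_exp.2 this) (hpos k).le
  have hZpos : ∀ x : ℝ, 0 < ∑' k, p0 k * Real.exp (c k * x) := by
    intro x
    exact Summable.tsum_pos (hZs x) (fun k => mul_nonneg (hpos k).le (Real.exp_pos _).le) 0
      (mul_pos (hpos 0) (Real.exp_pos _))
  constructor
  · intro n
    simp [flow, hone]
  · intro n t _
    -- derivative of Z
    set s : Set ℝ := Set.Ioo (-(|t| + 1)) (|t| + 1) with hs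
    have hts : t ∈ s := ⟨by cases abs_cases t with
        | inl h => linarith [h.1] | inr h => linarith [h.1], by
        cases abs_cases t with
        | inl h => linarith [h.1] | inr h => linarith [h.1]⟩
    have h0s : (0:ℝ) ∈ s := ⟨by nlinarith [abs_nonneg t], by nlinarith [abs_nonneg t]⟩
    have hZd : HasDerivAt (fun x => ∑' k, p0 k * Real.exp (c k * x))
        (∑' k, p0 k * c k * Real.exp (c k * t)) t := by
      apply hasDerivAt_tsum_of_isPreconnected
        ((hsum.mul_right (M * Real.exp (M * (|t| + 1)))))
        isOpen_Ioo (isPreconnected_Ioo)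
        (g := fun k x => p0 k * Real.exp (c k * x))
        (fun k y _ => ?_) (fun k y hy => ?_) h0s (by simpa using hZs 0) hts
      · simpa [mul_comm, mul_assoc, mul_left_comm] using
          (((hasDerivAt_id y).const_mul (c k)).exp.const_mul (p0 k))
      · have h1 : |c k * y| ≤ M * (|t| + 1) := by
          rw [abs_mul]
          have := abs_le.2 ⟨hy.1.le, hy.2.le⟩
          exact mul_le_mul (hM k) this (abs_nonneg _) hM0
        have h2 : Real.exp (c k * y) ≤ Real.exp (M * (|t| + 1)) :=
          Real.exp_le_exp.2 (le_trans (le_abs_self _) h1)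
        calc ‖p0 k * c k * Real.exp (c k * y)‖
            = p0 k * (|c k| * Real.exp (c k * y)) := by
              rw [Real.norm_eq_abs, abs_mul, abs_mul, abs_of_pos (hpos k),
                abs_of_pos (Real.exp_pos _), mul_assoc]
          _ ≤ p0 k * (M * Real.exp (M * (|t| + 1))) := by
              apply mul_le_mul_of_nonneg_left _ (hpos k).le
              exact mul_le_mul (hM k) h2 (Real.exp_pos _).le hM0
    have hfd : HasDerivAt (fun x => p0 n * Real.exp (c n * x))
        (p0 n * Real.exp (c n * t) * c n) t := by
      simpa [mul_comm, mul_assoc, mul_left_comm] using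
        (((hasDerivAt_id t).const_mul (c n)).exp.const_mul (p0 n))
    have hZt : (∑' k, p0 k * Real.exp (c k * t)) ≠ 0 := (hZpos t).ne'
    have hder := hfd.div hZd hZt
    convert hder using 1
    · rfl
    · rfl
    · rfl
    have hsumC : (∑' k, c k * flow c p0 t k)
        = (∑' k, p0 k * c k * Real.exp (c k * t)) / (∑' k, p0 k * Real.exp (c k * t)) := by
      rw [← tsum_div_const]
      congr 1
      funext k
      simp only [flow]
      ring
    rw [hsumC]
    simp only [flow]
    field_simp
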